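/- Let S be a real symmetric unreduced tridiagonal N×N matrix (N > 1) with eigenvalues λ_1 = 0 < λ_2 < ... < λ_N. Then every leading principal submatrix of S of size p×p, for 1 ≤ p ≤ N−1, is positive definite. -/

import Mathlib

open Matrix Polynomial

def IsTridiagonal {N : ℕ} (M : Matrix (Fin N) (Fin N) ℝ) : Prop :=
  ∀ i j : Fin N, ((i : ℕ) + 1 < j ∨ (j : ℕ) + 1 < i) → M i j = 0

def IsUnreduced {N : ℕ} (M : Matrix (Fin N) (Fin N) ℝ) : Prop :=
  ∀ i j : Fin N, (i : ℕ) + 1 = j → (M i j ≠ 0 ∧ M j i ≠ 0)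

lemma sum_extend {N p : ℕ} (hp : p ≤ N) (g : Fin N → ℝ)
    (hg : ∀ j : Fin N, p ≤ (j : ℕ) → g j = 0) :
    ∑ j, g j = ∑ i : Fin p, g (Fin.castLE hp i) := by
  classical
  have key : ∀ (n : ℕ) (hn : n ≤ N), ∑ i : Fin n, g (Fin.castLE hn i)
      = ∑ j ∈ Finset.range n, if h : j < N then g ⟨j, h⟩ else 0 := by
    intro n hn
    rw [← Fin.sum_univ_eq_sum_range (fun j => if h : j < N then g ⟨j, h⟩ else 0) n]
    refine Finset.sum_congr rfl fun i _ => ?_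
    have hi : (i : ℕ) < N := lt_of_lt_of_le i.2 hn
    simp only [hi, dif_pos]
    rfl
  have h1 : ∑ j, g j = ∑ i : Fin N, g (Fin.castLE le_rfl i) := by
    refine Finset.sum_congr rfl fun i _ => ?_
    congr 1
  rw [h1, key N le_rfl, key p hp]
  refine (Finset.sum_subset (Finset.range_subset_range.mpr hp) fun j hj hj' => ?_).symm
  simp only [Finset.mem_range] at hj hj'
  rw [dif_pos hj]
  exact hg ⟨j, hj⟩ (le_of_not_gt hj')

/-- For a real symmetric unreduced tridiagonal matrix (N > 1) with eigenvalues
`0 = λ₁ < λ₂ < ... < λ_N`, every leading principal submatrix of size `p × p`,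
`1 ≤ p ≤ N - 1`, is positive definite. -/
theorem stmt4 {N : ℕ} (hN : 1 < N) (S : Matrix (Fin N) (Fin N) ℝ)
    (hS : S.IsSymm) (htri : IsTridiagonal S) (hunr : IsUnreduced S)
    (μ : Fin N → ℝ) (hμ : StrictMono μ) (hμ0 : μ ⟨0, by omega⟩ = 0)
    (hchar : S.charpoly = ∏ i, (X - C (μ i))) :
    ∀ (p : ℕ) (_ : 1 ≤ p) (hp : p < N),
      (S.submatrix (Fin.castLE hp.le) (Fin.castLE hp.le)).PosDef := by
  classical
  have hHerm : S.IsHermitian := by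
    rwa [Matrix.IsHermitian, conjTranspose_eq_transpose_of_trivial]
  -- Every eigenvalue of S is some μ j, hence nonnegative.
  have hPSD : S.PosSemidef := by
    refine hHerm.posSemidef_iff_eigenvalues_nonneg.mpr fun i => show (0:ℝ) ≤ hHerm.eigenvalues i from ?_
    set t := hHerm.eigenvalues i with ht
    have hmem : t ∈ spectrum ℝ S := hHerm.eigenvalues_mem_spectrum_real i
    rw [spectrum.mem_iff] at hmem
    have hdet : (algebraMap ℝ (Matrix (Fin N) (Fin N) ℝ) t - S).det = 0 := by
      by_contra hd
      exact hmem ((Matrix.isUnit_iff_isUnit_det _).mpr (isUnit_iff_ne_zero.mpr hd))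
    have heval : Polynomial.eval t S.charpoly
        = (algebraMap ℝ (Matrix (Fin N) (Fin N) ℝ) t - S).det := by
      rw [Matrix.charpoly]
      have := RingHom.map_det (Polynomial.evalRingHom t) (charmatrix S)
      rw [show ((Polynomial.evalRingHom t) (charmatrix S).det : ℝ)
          = Polynomial.eval t (charmatrix S).det from rfl] at this
      rw [this]
      congr 1
      ext a b
      by_cases hab : a = b
      · subst hab
        simp [charmatrix_apply_eq, Matrix.algebraMap_matrix_apply]
      · simp [charmatrix_apply_ne _ _ _ hab, Matrix.algebraMap_matrix_apply, hab]
    rw [hchar] at heval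
    have hprod : ∏ j, (t - μ j) = 0 := by
      rw [← hdet, ← heval]
      simp [Polynomial.eval_prod]
    obtain ⟨j, _, hj⟩ := Finset.prod_eq_zero_iff.mp hprod
    have : t = μ j := by linarith [sub_eq_zero.mp hj]
    rw [this, ← hμ0]
    exact hμ.monotone (by simp [Fin.le_def])
  intro p hp1 hp
  have hple : p ≤ N := hp.le
  set e : Fin p → Fin N := Fin.castLE hple with he
  have hPSDp : (S.submatrix e e).PosSemidef := hPSD.submatrix e
  refine posDef_iff_dotProduct_mulVec.mpr ⟨hPSDp.1, fun x hx => ?_⟩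
  rcases lt_or_eq_of_le (hPSDp.dotProduct_mulVec_nonneg x) with h | h
  · simpa using h
  exfalso
  -- extend x by zeros
  set y : Fin N → ℝ := fun j => if h : (j : ℕ) < p then x ⟨j, h⟩ else 0 with hy
  have hy0 : ∀ j : Fin N, p ≤ (j : ℕ) → y j = 0 := by
    intro j hj
    simp only [hy]
    rw [dif_neg (not_lt.mpr hj)]
  have hyc : ∀ i : Fin p, y (e i) = x i := by
    intro i
    simp only [hy, he, Fin.coe_castLE]
    rw [dif_pos i.2]
  -- quadratic form of y equals that of x
  have hform : dotProduct y (S *ᵥ y) = dotProduct x ((S.submatrix e e) *ᵥ x) := by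
    unfold dotProduct mulVec dotProduct
    rw [sum_extend hple (fun j => y j * ∑ k, S j k * y k)
      (fun j hj => by simp only [hy0 j hj, zero_mul])]
    refine Finset.sum_congr rfl fun i _ => ?_
    rw [hyc i]
    congr 1
    rw [sum_extend hple (fun k => S (e i) k * y k)
      (fun k hk => by simp only [hy0 k hk, mul_zero])]
    refine Finset.sum_congr rfl fun k _ => ?_
    rw [hyc k]
    rfl
  have hker : S *ᵥ y = 0 := by
    rw [← hPSD.dotProduct_mulVec_zero_iff y]
    have h' : dotProduct x ((S.submatrix e e) *ᵥ x) = 0 := by simpa using h.symm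
    calc star y ⬝ᵥ S *ᵥ y = dotProduct y (S *ᵥ y) := by simp
      _ = 0 := by rw [hform, h']
  -- downward induction: all entries of y vanish
  have hzero : ∀ m : ℕ, ∀ j : Fin N, p ≤ (j : ℕ) + m → y j = 0 := by
    intro m
    induction m with
    | zero => intro j hj; exact hy0 j (by omega)
    | succ m ih =>
      intro j hj
      by_cases hcase : p ≤ (j : ℕ) + m
      · exact ih j hcase
      have hjp : (j : ℕ) + m + 1 = p := by omega
      have hj1 : (j : ℕ) + 1 < N := by omega
      set j' : Fin N := ⟨(j : ℕ) + 1, hj1⟩ with hj'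
      have hrow : (S *ᵥ y) j' = 0 := by rw [hker]; rfl
      have hsum : ∑ k, S j' k * y k = S j' j * y j := by
        refine Finset.sum_eq_single j (fun b _ hb => ?_) (by simp)
        rcases lt_or_gt_of_ne (fun hbj : (b : ℕ) = (j : ℕ) => hb (Fin.ext hbj)) with hlt | hgt
        · rw [htri j' b (Or.inr (by simp only [hj']; omega)), zero_mul]
        · rw [ih b (by omega), mul_zero]
      have hSj : S j' j ≠ 0 := (hunr j j' rfl).2
      have : S j' j * y j = 0 := by
        rw [← hsum]; exact hrow
      have := mul_eq_zero.mp this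
      tauto
  apply hx
  funext i
  rw [← hyc i]
  exact hzero p (e i) (by omega)
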